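/- arXiv:1011.4613 — 5 statements merged into one kernel-verified Lean document; each statement's English description precedes it below -/
import Mathlib

section
/- If a real Banach space X admits a separating polynomial, then there exist an integer n ≥ 1, a constant A > 1, and a continuous 2n-homogeneous polynomial q : X → ℝ such that ‖x‖^{2n} ≤ q(x) ≤ A‖x‖^{2n} for all x ∈ X. -/
/-- A continuous polynomial: a finite sum of continuous homogeneous polynomials. -/
def IsContinuousPolynomial {X : Type*} [NormedAddCommGroup X] [NormedSpace ℝ X]
    (P : X → ℝ) : Prop :=
  ∃ n : ℕ, ∃ M : ∀ i : ℕ, ContinuousMultilinearMap ℝ (fun _ : Fin i => X) ℝ,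
    ∀ x : X, P x = ∑ i ∈ Finset.range (n + 1), (M i) (fun _ => x)

/-- `X` admits a separating polynomial: a continuous polynomial vanishing at `0`
whose infimum on the unit sphere is strictly positive. -/
def HasSeparatingPoly (X : Type*) [NormedAddCommGroup X] [NormedSpace ℝ X] : Prop :=
  ∃ P : X → ℝ, IsContinuousPolynomial P ∧ P 0 = 0 ∧
    ∃ c : ℝ, 0 < c ∧ ∀ x : X, ‖x‖ = 1 → c ≤ P x

section Helpers

variable {X : Type*} [NormedAddCommGroup X] [NormedSpace ℝ X]

/-- Product of two real-valued continuous multilinear maps, as a continuous multilinear map. -/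
noncomputable def cmMul {a b : ℕ} (f : ContinuousMultilinearMap ℝ (fun _ : Fin a => X) ℝ)
    (g : ContinuousMultilinearMap ℝ (fun _ : Fin b => X) ℝ) :
    ContinuousMultilinearMap ℝ (fun _ : Fin (a + b) => X) ℝ :=
  MultilinearMap.mkContinuous
    (((LinearMap.mul' ℝ ℝ).compMultilinearMap
        (f.toMultilinearMap.domCoprod g.toMultilinearMap)).domDomCongr finSumFinEquiv)
    (‖f‖ * ‖g‖) (by
      intro v
      simp only [MultilinearMap.domDomCongr_apply, LinearMap.compMultilinearMap_apply,
        MultilinearMap.domCoprod_apply, LinearMap.mul'_apply]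
      have h1 := f.le_opNorm (fun i => v (finSumFinEquiv (Sum.inl i)))
      have h2 := g.le_opNorm (fun i => v (finSumFinEquiv (Sum.inr i)))
      calc ‖(f fun i => v (finSumFinEquiv (Sum.inl i))) * g fun i => v (finSumFinEquiv (Sum.inr i))‖
          = ‖f fun i => v (finSumFinEquiv (Sum.inl i))‖ * ‖g fun i => v (finSumFinEquiv (Sum.inr i))‖ := norm_mul _ _
        _ ≤ (‖f‖ * ∏ i, ‖v (finSumFinEquiv (Sum.inl i))‖) * (‖g‖ * ∏ i, ‖v (finSumFinEquiv (Sum.inr i))‖) := by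
            apply mul_le_mul h1 h2 (norm_nonneg _)
            positivity
        _ = ‖f‖ * ‖g‖ * ((∏ i, ‖v (finSumFinEquiv (Sum.inl i))‖) * ∏ i, ‖v (finSumFinEquiv (Sum.inr i))‖) := by ring
        _ = ‖f‖ * ‖g‖ * ∏ i, ‖v i‖ := by
            congr 1
            rw [← finSumFinEquiv.prod_comp (fun k => ‖v k‖), Fintype.prod_sum_type])

theorem cmMul_diag {a b : ℕ} (f : ContinuousMultilinearMap ℝ (fun _ : Fin a => X) ℝ)
    (g : ContinuousMultilinearMap ℝ (fun _ : Fin b => X) ℝ) (x : X) :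
    cmMul f g (fun _ => x) = f (fun _ => x) * g (fun _ => x) := by
  simp [cmMul, MultilinearMap.coe_mkContinuous]

/-- Cast a continuous multilinear map along an equality of arities. -/
def castCM {a b : ℕ} (h : a = b) (f : ContinuousMultilinearMap ℝ (fun _ : Fin a => X) ℝ) :
    ContinuousMultilinearMap ℝ (fun _ : Fin b => X) ℝ := h ▸ f

theorem castCM_diag {a b : ℕ} (h : a = b) (f : ContinuousMultilinearMap ℝ (fun _ : Fin a => X) ℝ)
    (x : X) : castCM h f (fun _ => x) = f (fun _ => x) := by subst h; rfl

/-- Power of a continuous multilinear map. -/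
noncomputable def powCM {a : ℕ} (f : ContinuousMultilinearMap ℝ (fun _ : Fin a => X) ℝ) :
    (k : ℕ) → ContinuousMultilinearMap ℝ (fun _ : Fin (a * k) => X) ℝ
  | 0 => castCM (Nat.mul_zero a).symm (ContinuousMultilinearMap.constOfIsEmpty ℝ _ 1)
  | k + 1 => castCM (by ring) (cmMul (powCM f k) f)

theorem powCM_diag {a : ℕ} (f : ContinuousMultilinearMap ℝ (fun _ : Fin a => X) ℝ) (k : ℕ)
    (x : X) : powCM f k (fun _ => x) = (f fun _ => x) ^ k := by
  induction k with
  | zero => simp [powCM, castCM_diag]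
  | succ k ih => rw [powCM, castCM_diag, cmMul_diag, ih, pow_succ]


end Helpers

/-- If a real Banach space admits a separating polynomial, then it admits a continuous
`2n`-homogeneous polynomial `q` with `‖x‖^(2n) ≤ q x ≤ A‖x‖^(2n)` for some `A > 1`. -/
theorem exists_homogeneous_separating_poly
    {X : Type*} [NormedAddCommGroup X] [NormedSpace ℝ X] [CompleteSpace X]
    (hsep : HasSeparatingPoly X) :
    ∃ n : ℕ, 1 ≤ n ∧ ∃ A : ℝ, 1 < A ∧ ∃ q : X → ℝ,
      (∃ M : ContinuousMultilinearMap ℝ (fun _ : Fin (2 * n) => X) ℝ,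
        ∀ x : X, q x = M (fun _ => x)) ∧
      ∀ x : X, ‖x‖ ^ (2 * n) ≤ q x ∧ q x ≤ A * ‖x‖ ^ (2 * n) := by
  obtain ⟨P, ⟨n, M, hP⟩, hP0, c, hc, hsph⟩ := hsep
  by_cases htriv : ∀ x : X, x = 0
  · refine ⟨1, le_refl 1, 2, one_lt_two,
      fun x => (0 : ContinuousMultilinearMap ℝ (fun _ : Fin (2 * 1) => X) ℝ) (fun _ => x),
      ⟨0, fun x => rfl⟩, fun x => ?_⟩
    rw [htriv x]
    norm_num
  push_neg at htriv
  obtain ⟨x₀, hx₀⟩ := htriv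
  have hu : ‖(‖x₀‖⁻¹ • x₀)‖ = 1 := by
    rw [norm_smul, norm_inv, norm_norm, inv_mul_cancel₀ (norm_ne_zero_iff.mpr hx₀)]
  have hMzero : ∀ i : ℕ, 1 ≤ i → (M i) (fun _ => (0 : X)) = 0 := by
    intro i hi
    have hne : Nonempty (Fin i) := ⟨⟨0, hi⟩⟩
    have h0 : (fun _ : Fin i => (0 : X)) = 0 := rfl
    rw [h0, ContinuousMultilinearMap.map_zero]
  have hM0 : ∀ x : X, (M 0) (fun _ => x) = 0 := by
    intro x
    have h1 : (fun _ : Fin 0 => x) = (fun _ : Fin 0 => (0 : X)) := funext fun i => i.elim0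
    have h2 := hP 0
    rw [hP0, Finset.sum_range_succ'] at h2
    have h3 : ∀ i ∈ Finset.range n, (M (i + 1)) (fun _ => (0 : X)) = 0 :=
      fun i _ => hMzero (i + 1) (Nat.succ_le_succ (Nat.zero_le i))
    rw [Finset.sum_congr rfl h3, Finset.sum_const, smul_zero, zero_add] at h2
    rw [h1, ← h2]
  have hsum : ∀ x : X, ‖x‖ = 1 → c ≤ ∑ i ∈ Finset.range n, (M (i + 1)) (fun _ => x) := by
    intro x hx
    have h := hsph x hx
    rw [hP x, Finset.sum_range_succ', hM0 x, add_zero] at h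
    exact h
  have hn : 1 ≤ n := by
    by_contra h
    have hn0 : n = 0 := by omega
    have h2 := hsum _ hu
    rw [hn0, Finset.range_zero, Finset.sum_empty] at h2
    linarith
  set L := Nat.factorial n with hLdef
  have hL : 1 ≤ L := (Nat.factorial_pos n)
  set e : ℕ → ℕ := fun i => 2 * (L / i) with hedef
  have hdeg : ∀ i ∈ Finset.range n, (i + 1) * e (i + 1) = 2 * L := by
    intro i hi
    have hin : i + 1 ≤ n := by simpa using hi
    have hdvd : (i + 1) ∣ L := Nat.dvd_factorial (Nat.succ_pos i) hin
    have hcan := Nat.mul_div_cancel' hdvd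
    calc (i + 1) * (2 * (L / (i + 1))) = 2 * ((i + 1) * (L / (i + 1))) := by ring
      _ = 2 * L := by rw [hcan]
  have heL : ∀ i ∈ Finset.range n, e (i + 1) ≤ 2 * L := by
    intro i hi
    exact Nat.mul_le_mul_left 2 (Nat.div_le_self L (i + 1))
  have hepos : ∀ i : ℕ, 1 ≤ e (i + 1) → True := fun _ _ => trivial
  have he1 : ∀ i ∈ Finset.range n, 1 ≤ e (i + 1) := by
    intro i hi
    have hin : i + 1 ≤ n := by simpa using hi
    have hdvd : (i + 1) ∣ L := Nat.dvd_factorial (Nat.succ_pos i) hin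
    have : 1 ≤ L / (i + 1) := Nat.one_le_div_iff (Nat.succ_pos i) |>.mpr
      (le_trans hin (Nat.self_le_factorial n))
    show 1 ≤ 2 * (L / (i + 1))
    omega
  obtain ⟨q₀, hq₀diag⟩ :
      ∃ q₀ : ContinuousMultilinearMap ℝ (fun _ : Fin (2 * L) => X) ℝ,
        ∀ x : X, q₀ (fun _ => x) =
          ∑ i ∈ (Finset.range n).attach, ((M (i.1 + 1)) (fun _ => x)) ^ (e (i.1 + 1)) :=
    ⟨∑ i ∈ (Finset.range n).attach,
        castCM (hdeg i.1 i.2) (powCM (M (i.1 + 1)) (e (i.1 + 1))),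
     fun x => by
      rw [ContinuousMultilinearMap.sum_apply]
      exact Finset.sum_congr rfl fun i _ => by rw [castCM_diag, powCM_diag]⟩
  set m := min (c / n) 1 with hmdef
  have hnpos : (0 : ℝ) < n := by exact_mod_cast hn
  have hm0 : 0 < m := lt_min (div_pos hc hnpos) one_pos
  set δ := m ^ (2 * L) with hδdef
  have hδ0 : 0 < δ := pow_pos hm0 _
  set B := ∑ i ∈ (Finset.range n).attach, ‖M (i.1 + 1)‖ ^ (e (i.1 + 1)) with hBdef
  -- lower bound on sphere
  have hlow : ∀ x : X, ‖x‖ = 1 → δ ≤ q₀ (fun _ => x) := by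
    intro x hx
    have hconst : ∑ _i ∈ Finset.range n, c / n ≤
        ∑ i ∈ Finset.range n, (M (i + 1)) (fun _ => x) := by
      rw [Finset.sum_const, Finset.card_range, nsmul_eq_mul]
      rw [mul_div_cancel₀ c (ne_of_gt hnpos)]
      exact hsum x hx
    obtain ⟨i₀, hi₀mem, hi₀⟩ := Finset.exists_le_of_sum_le
      (Finset.nonempty_range_iff.mpr (by omega)) hconst
    rw [hq₀diag]
    have hterm : δ ≤ ((M (i₀ + 1)) (fun _ => x)) ^ (e (i₀ + 1)) := by
      have h1 : m ≤ (M (i₀ + 1)) (fun _ => x) :=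
        le_trans (min_le_left _ _) hi₀
      have h2 : m ^ (e (i₀ + 1)) ≤ ((M (i₀ + 1)) (fun _ => x)) ^ (e (i₀ + 1)) :=
        pow_le_pow_left₀ hm0.le h1 _
      have h3 : m ^ (2 * L) ≤ m ^ (e (i₀ + 1)) :=
        pow_le_pow_of_le_one hm0.le (min_le_right _ _) (heL i₀ hi₀mem)
      exact le_trans h3 h2
    refine le_trans hterm (Finset.single_le_sum (f := fun i =>
        ((M (i.1 + 1)) (fun _ => x)) ^ (e (i.1 + 1))) ?_ (Finset.mem_attach _ ⟨i₀, hi₀mem⟩))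
    intro i _
    exact Even.pow_nonneg ⟨L / (i.1 + 1), by rw [hedef]; ring⟩ _
  -- upper bound on sphere
  have hhigh : ∀ x : X, ‖x‖ = 1 → q₀ (fun _ => x) ≤ B := by
    intro x hx
    rw [hq₀diag, hBdef]
    refine Finset.sum_le_sum fun i _ => ?_
    have habs : |(M (i.1 + 1)) (fun _ => x)| ≤ ‖M (i.1 + 1)‖ := by
      have := (M (i.1 + 1)).le_opNorm (fun _ => x)
      simpa [hx] using this
    have heven : Even (e (i.1 + 1)) := ⟨L / (i.1 + 1), by rw [hedef]; ring⟩
    calc ((M (i.1 + 1)) (fun _ => x)) ^ (e (i.1 + 1))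
        = |(M (i.1 + 1)) (fun _ => x)| ^ (e (i.1 + 1)) := (heven.pow_abs _).symm
      _ ≤ ‖M (i.1 + 1)‖ ^ (e (i.1 + 1)) := pow_le_pow_left₀ (abs_nonneg _) habs _
  refine ⟨L, hL, max (B / δ) 2, lt_of_lt_of_le one_lt_two (le_max_right _ _),
    fun x => δ⁻¹ * q₀ (fun _ => x), ⟨δ⁻¹ • q₀, fun x => by
      rw [ContinuousMultilinearMap.smul_apply, smul_eq_mul]⟩, fun x => ?_⟩
  by_cases hx : x = 0
  · subst hx
    have h0 : q₀ (fun _ => (0 : X)) = 0 := by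
      rw [hq₀diag]
      refine Finset.sum_eq_zero fun i _ => ?_
      rw [hMzero (i.1 + 1) (Nat.succ_le_succ (Nat.zero_le _)),
        zero_pow (by have := he1 i.1 i.2; omega)]
    have h2L : 2 * L ≠ 0 := by omega
    simp [h0, zero_pow h2L]
  · set t := ‖x‖ with htdef
    have ht0 : 0 < t := norm_pos_iff.mpr hx
    set u' := t⁻¹ • x with hu'def
    have hu1 : ‖u'‖ = 1 := by
      rw [hu'def, norm_smul, norm_inv, norm_norm, inv_mul_cancel₀ (ne_of_gt ht0)]
    have hhom : q₀ (fun _ => x) = t ^ (2 * L) * q₀ (fun _ => u') := by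
      have hx' : x = t • u' := by
        rw [hu'def, smul_smul, mul_inv_cancel₀ (ne_of_gt ht0), one_smul]
      conv_lhs => rw [hx']
      have := q₀.map_smul_univ (fun _ : Fin (2 * L) => t) (fun _ => u')
      simpa [smul_eq_mul, Finset.prod_const, Finset.card_univ] using this
    have hlo := hlow u' hu1
    have hhi := hhigh u' hu1
    have htpow : 0 < t ^ (2 * L) := pow_pos ht0 _
    constructor
    · show t ^ (2 * L) ≤ δ⁻¹ * q₀ (fun _ => x)
      rw [hhom]
      rw [← mul_assoc]
      calc t ^ (2 * L) = δ⁻¹ * t ^ (2 * L) * δ := by field_simp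
        _ ≤ δ⁻¹ * t ^ (2 * L) * q₀ (fun _ => u') := by
            apply mul_le_mul_of_nonneg_left hlo
            positivity
    · show δ⁻¹ * q₀ (fun _ => x) ≤ max (B / δ) 2 * ‖x‖ ^ (2 * L)
      rw [hhom, ← mul_assoc]
      calc δ⁻¹ * t ^ (2 * L) * q₀ (fun _ => u') ≤ δ⁻¹ * t ^ (2 * L) * B := by
            apply mul_le_mul_of_nonneg_left hhi
            positivity
        _ = B / δ * t ^ (2 * L) := by field_simp
        _ ≤ max (B / δ) 2 * t ^ (2 * L) :=
            mul_le_mul_of_nonneg_right (le_max_left _ _) htpow.le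
end

section
/- Let n ≥ 1, A > 1, and let q : X → ℝ be a continuous 2n-homogeneous polynomial on a real Banach space X with ‖x‖^{2n} ≤ q(x) ≤ A‖x‖^{2n} for all x ∈ X. Then the function Q(x) = (q(x)+1)^{1/(2n)} − 1 is real-analytic on X. -/
/-- A function `g : X → ℝ` is real-analytic if around every point it is given by a
convergent sum of continuous homogeneous polynomials. -/
def IsRealAnalytic {X : Type*} [NormedAddCommGroup X] [NormedSpace ℝ X] (g : X → ℝ) : Prop :=
  ∀ x : X, ∃ N ∈ nhds x,
    ∃ P : ∀ k : ℕ, ContinuousMultilinearMap ℝ (fun _ : Fin k => X) ℝ,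
      ∀ h : X, x + h ∈ N → HasSum (fun k => (P k) (fun _ => h)) (g (x + h))

/-- `t ↦ t ^ c` is real-analytic at positive points. -/
lemma analyticAt_rpow_const {t : ℝ} (ht : 0 < t) (c : ℝ) :
    AnalyticAt ℝ (fun s : ℝ => s ^ c) t := by
  have h1 : AnalyticAt ℂ (fun z : ℂ => z ^ (c : ℂ)) (t : ℂ) :=
    analyticAt_id.cpow analyticAt_const (by simp [Complex.mem_slitPlane_iff, ht])
  have h2 : AnalyticAt ℝ (fun z : ℂ => z ^ (c : ℂ)) (t : ℂ) := h1.restrictScalars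
  have h3 : AnalyticAt ℝ (fun s : ℝ => ((s : ℂ) ^ (c : ℂ)).re) t :=
    (Complex.reCLM.analyticAt _).comp (h2.comp (Complex.ofRealCLM.analyticAt t))
  apply h3.congr
  have : ∀ᶠ s : ℝ in nhds t, 0 < s := eventually_gt_nhds ht
  filter_upwards [this] with s hs
  rw [← Complex.ofReal_cpow hs.le]
  simp

/-- If `q` is a continuous `2n`-homogeneous polynomial with
`‖x‖^(2n) ≤ q x ≤ A‖x‖^(2n)`, then `Q x = (q x + 1)^(1/(2n)) - 1` is real-analytic. -/
theorem Q_isRealAnalytic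
    {X : Type*} [NormedAddCommGroup X] [NormedSpace ℝ X] [CompleteSpace X]
    (n : ℕ) (hn : 1 ≤ n) (A : ℝ) (hA : 1 < A)
    (q : X → ℝ)
    (M : ContinuousMultilinearMap ℝ (fun _ : Fin (2 * n) => X) ℝ)
    (hq : ∀ x : X, q x = M (fun _ => x))
    (hbound : ∀ x : X, ‖x‖ ^ (2 * n) ≤ q x ∧ q x ≤ A * ‖x‖ ^ (2 * n)) :
    IsRealAnalytic (fun x : X => (q x + 1) ^ ((1 : ℝ) / (2 * n)) - 1) := by
  intro x
  -- q is analytic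
  have hqa : ∀ y : X, AnalyticAt ℝ q y := by
    intro y
    have hdiag : AnalyticAt ℝ (fun z : X => (fun _ : Fin (2 * n) => z)) y :=
      (ContinuousLinearMap.pi fun _ : Fin (2 * n) =>
        ContinuousLinearMap.id ℝ X).analyticAt y
    have := (M.analyticAt (x := fun _ => y)).comp hdiag
    exact this.congr (Filter.Eventually.of_forall fun z => (hq z).symm)
  have hpos : 0 < q x + 1 := by
    have h1 := (hbound x).1
    have h0 : (0:ℝ) ≤ ‖x‖ ^ (2*n) := by positivity
    linarith
  have hQa : AnalyticAt ℝ (fun y : X => (q y + 1) ^ ((1 : ℝ) / (2 * n)) - 1) x := by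
    have h1 : AnalyticAt ℝ (fun y : X => q y + 1) x := (hqa x).add analyticAt_const
    have h2 : AnalyticAt ℝ (fun y : X => (q y + 1) ^ ((1 : ℝ) / (2 * n))) x :=
      (analyticAt_rpow_const hpos ((1 : ℝ) / (2 * n))).comp (f := fun y : X => q y + 1) h1
    exact h2.sub analyticAt_const
  obtain ⟨p, r, hp⟩ := hQa
  refine ⟨Metric.eball x r, EMetric.ball_mem_nhds x hp.r_pos, p, fun h hh => ?_⟩
  have : h ∈ Metric.eball (0 : X) r := by
    rw [EMetric.mem_ball] at hh ⊢
    simpa [edist_eq_enorm_sub] using hh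
  exact hp.hasSum this
end

section
/- Let n ≥ 1, A > 1, and let q : X → ℝ be a continuous 2n-homogeneous polynomial on a real Banach space X with ‖x‖^{2n} ≤ q(x) ≤ A‖x‖^{2n} for all x ∈ X. Then the function Q(x) = (q(x)+1)^{1/(2n)} − 1 is Lipschitz on X, i.e. there is a constant L > 0 with |Q(x) − Q(y)| ≤ L‖x − y‖ for all x, y ∈ X. -/
/-- If `q` is a continuous `2n`-homogeneous polynomial with
`‖x‖^(2n) ≤ q x ≤ A‖x‖^(2n)`, then `Q x = (q x + 1)^(1/(2n)) - 1` is Lipschitz. -/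
theorem Q_lipschitz
    {X : Type*} [NormedAddCommGroup X] [NormedSpace ℝ X] [CompleteSpace X]
    (n : ℕ) (hn : 1 ≤ n) (A : ℝ) (hA : 1 < A)
    (q : X → ℝ)
    (M : ContinuousMultilinearMap ℝ (fun _ : Fin (2 * n) => X) ℝ)
    (hq : ∀ x : X, q x = M (fun _ => x))
    (hbound : ∀ x : X, ‖x‖ ^ (2 * n) ≤ q x ∧ q x ≤ A * ‖x‖ ^ (2 * n)) :
    ∃ L : ℝ, 0 < L ∧ ∀ x y : X,
      |((q x + 1) ^ ((1 : ℝ) / (2 * n)) - 1) - ((q y + 1) ^ ((1 : ℝ) / (2 * n)) - 1)|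
        ≤ L * ‖x - y‖ := by
  set p : ℝ := (1 : ℝ) / (2 * n) with hp
  have hn0 : (0 : ℝ) < 2 * n := by positivity
  have hppos : 0 < p := by positivity
  have hp2n : p * (2 * n) = 1 := by
    rw [hp, one_div, inv_mul_cancel₀ hn0.ne']
  have hq1 : ∀ z : X, (1 : ℝ) ≤ q z + 1 := fun z => by
    have := (hbound z).1
    nlinarith [norm_nonneg z, pow_nonneg (norm_nonneg z) (2 * n)]
  -- the diagonal map
  set diag : X →L[ℝ] (Fin (2 * n) → X) :=
    ContinuousLinearMap.pi (fun _ => ContinuousLinearMap.id ℝ X) with hdiag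
  -- derivative of F z = (q z + 1) ^ p
  have hF : ∀ x : X, HasFDerivAt (fun z : X => (q z + 1) ^ p)
      ((p * (q x + 1) ^ (p - 1)) • ((M.linearDeriv (fun _ => x)).comp diag)) x := by
    intro x
    have hMd : HasFDerivAt (fun z : X => M (fun _ => z))
        ((M.linearDeriv (fun _ => x)).comp diag) x := by
      exact (M.hasFDerivAt (fun _ => x)).comp x (diag.hasFDerivAt)
    have hgd : HasFDerivAt (fun z : X => q z + 1)
        ((M.linearDeriv (fun _ => x)).comp diag) x := by
      simpa only [← hq] using hMd.add_const 1
    have hne : q x + 1 ≠ 0 := by linarith [hq1 x]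
    exact hgd.rpow_const (Or.inl hne)
  -- bound the derivative
  have hDbound : ∀ x : X,
      ‖(p * (q x + 1) ^ (p - 1)) • ((M.linearDeriv (fun _ => x)).comp diag)‖ ≤ ‖M‖ := by
    intro x
    set c : ℝ := max ‖x‖ 1 with hc
    have hc1 : (1 : ℝ) ≤ c := le_max_right _ _
    have hc0 : (0 : ℝ) < c := lt_of_lt_of_le one_pos hc1
    -- bound on the multilinear derivative
    have hlin : ‖(M.linearDeriv (fun _ => x)).comp diag‖
        ≤ (2 * n) * ‖M‖ * ‖x‖ ^ (2 * n - 1) := by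
      apply ContinuousLinearMap.opNorm_le_bound
      · positivity
      intro h
      have : ((M.linearDeriv (fun _ => x)).comp diag) h
          = ∑ i : Fin (2 * n), M (Function.update (fun _ => x) i h) := by
        simp [hdiag, ContinuousMultilinearMap.linearDeriv_apply]
      rw [this]
      calc ‖∑ i : Fin (2 * n), M (Function.update (fun _ => x) i h)‖
          ≤ ∑ i : Fin (2 * n), ‖M (Function.update (fun _ => x) i h)‖ :=
            norm_sum_le _ _
        _ ≤ ∑ _i : Fin (2 * n), ‖M‖ * (‖x‖ ^ (2 * n - 1) * ‖h‖) := by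
            apply Finset.sum_le_sum
            intro i _
            calc ‖M (Function.update (fun _ => x) i h)‖
                ≤ ‖M‖ * ∏ j, ‖Function.update (fun _ : Fin (2 * n) => x) i h j‖ :=
                  M.le_opNorm _
              _ = ‖M‖ * (‖x‖ ^ (2 * n - 1) * ‖h‖) := by
                  congr 1
                  rw [show (fun j => ‖Function.update (fun _ : Fin (2 * n) => x) i h j‖)
                      = Function.update (fun _ : Fin (2 * n) => ‖x‖) i ‖h‖ by
                    ext j
                    by_cases hj : j = i
                    · subst hj; simp
                    · simp [Function.update_of_ne hj]]
                  rw [Finset.prod_update_of_mem (Finset.mem_univ i), Finset.prod_const]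
                  rw [show (Finset.univ \ {i}).card = 2 * n - 1 by
                    rw [Finset.sdiff_singleton_eq_erase,
                      Finset.card_erase_of_mem (Finset.mem_univ i)]
                    simp]
                  ring
        _ = (2 * n) * ‖M‖ * ‖x‖ ^ (2 * n - 1) * ‖h‖ := by
            rw [Finset.sum_const, Finset.card_univ, Fintype.card_fin]
            push_cast
            ring
    have hrp : (0:ℝ) < (q x + 1) ^ (p - 1) :=
      Real.rpow_pos_of_pos (by linarith [hq1 x]) _
    have hscal : |p * (q x + 1) ^ (p - 1)| = p * (q x + 1) ^ (p - 1) :=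
      abs_of_pos (mul_pos hppos hrp)
    refine le_trans (ContinuousLinearMap.opNorm_smul_le _ _) ?_
    rw [Real.norm_eq_abs, hscal]
    -- key inequality: (q x + 1)^(p-1) * ‖x‖^(2n-1) ≤ c^(1-2n) * c^(2n-1) = 1
    have hb1 : q x + 1 ≥ c ^ (2 * n) := by
      rcases max_cases ‖x‖ 1 with ⟨h1, h2⟩ | ⟨h1, h2⟩
      · rw [hc, h1]; linarith [(hbound x).1]
      · rw [hc, h1, one_pow]; exact hq1 x
    have hrpow1 : (q x + 1) ^ (p - 1) ≤ (c ^ (2 * n) : ℝ) ^ (p - 1) := by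
      apply Real.rpow_le_rpow_of_nonpos (by positivity) hb1
      rw [hp]
      have : (1:ℝ) / (2 * n) ≤ 1 := by
        rw [div_le_one hn0]
        have : (1:ℝ) ≤ n := by exact_mod_cast hn
        linarith
      linarith
    have hcast : ((c ^ (2 * n) : ℝ)) ^ (p - 1) = c ^ ((2 * n : ℝ) * (p - 1)) := by
      rw [← Real.rpow_natCast c (2 * n), ← Real.rpow_mul hc0.le]
      push_cast
      ring_nf
    have hx_le_c : ‖x‖ ^ (2 * n - 1) ≤ c ^ (2 * n - 1) :=
      pow_le_pow_left₀ (norm_nonneg x) (le_max_left _ _) _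
    have hcpow : c ^ ((2 * n : ℝ) * (p - 1)) * c ^ (2 * n - 1) = 1 := by
      rw [← Real.rpow_natCast c (2 * n - 1), ← Real.rpow_add hc0]
      have hcast2 : ((2 * n - 1 : ℕ) : ℝ) = 2 * n - 1 := by
        have : 1 ≤ 2 * n := by omega
        push_cast [Nat.cast_sub this]
        ring
      rw [hcast2]
      have : (2 * n : ℝ) * (p - 1) + (2 * (n:ℝ) - 1) = 0 := by
        have : (2 * n : ℝ) * p = 1 := by rw [mul_comm]; exact hp2n
        linear_combination this
      rw [this, Real.rpow_zero]
    calc p * (q x + 1) ^ (p - 1) * ‖(M.linearDeriv (fun _ => x)).comp diag‖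
        ≤ p * (q x + 1) ^ (p - 1) * ((2 * n) * ‖M‖ * ‖x‖ ^ (2 * n - 1)) := by
          apply mul_le_mul_of_nonneg_left hlin
          have : (0:ℝ) < (q x + 1) ^ (p - 1) :=
            Real.rpow_pos_of_pos (by linarith [hq1 x]) _
          positivity
      _ = ‖M‖ * ((q x + 1) ^ (p - 1) * ‖x‖ ^ (2 * n - 1)) * (p * (2 * n)) := by ring
      _ = ‖M‖ * ((q x + 1) ^ (p - 1) * ‖x‖ ^ (2 * n - 1)) := by rw [hp2n, mul_one]
      _ ≤ ‖M‖ * (c ^ ((2 * n : ℝ) * (p - 1)) * c ^ (2 * n - 1)) := by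
          apply mul_le_mul_of_nonneg_left _ (norm_nonneg M)
          apply mul_le_mul (by rw [← hcast]; exact hrpow1) hx_le_c (by positivity)
          · positivity
      _ = ‖M‖ := by rw [hcpow, mul_one]
  -- conclude by the mean value inequality
  refine ⟨‖M‖ + 1, by positivity, fun x y => ?_⟩
  have key : ‖(q x + 1) ^ p - (q y + 1) ^ p‖ ≤ (‖M‖ + 1) * ‖x - y‖ := by
    apply Convex.norm_image_sub_le_of_norm_hasFDerivWithin_le
      (f := fun z : X => (q z + 1) ^ p)
      (f' := fun z => (p * (q z + 1) ^ (p - 1)) • ((M.linearDeriv (fun _ => z)).comp diag))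
      (fun z _ => (hF z).hasFDerivWithinAt)
      (fun z _ => le_trans (hDbound z) (by linarith))
      convex_univ (Set.mem_univ y) (Set.mem_univ x)
  rw [Real.norm_eq_abs] at key
  calc |((q x + 1) ^ p - 1) - ((q y + 1) ^ p - 1)|
      = |(q x + 1) ^ p - (q y + 1) ^ p| := by ring_nf
    _ ≤ (‖M‖ + 1) * ‖x - y‖ := key
end

section
/- Let X be a separable real Banach space, let n ≥ 1, A > 1, and let q : X → ℝ be a continuous 2n-homogeneous polynomial with ‖x‖^{2n} ≤ q(x) ≤ A‖x‖^{2n} for all x; set Q(x) = (q(x)+1)^{1/(2n)} − 1, let Lip(Q) denote a Lipschitz constant of Q, and for x ∈ X, ρ > 0 let D_Q(x,ρ) = {y ∈ X : Q(y−x) < ρ}. Let {x_m}_{m≥1} be a dense sequence in X. Then there exists a constant L₁ ≥ 1 (independent of ε below) such that for every r > 0 and every ε ∈ (0,1) there is a sequence of real-analytic, continuously Fréchet differentiable functions φ_m : X → ℝ with: (1) every φ_m is Lipschitz with constant L₁·Lip(Q)/r; (2) 0 ≤ φ_m(x) ≤ 1+ε for all x ∈ X and all m; (3) for every x ∈ X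 there exists m with φ_m(x) > 1/2; (4) 0 ≤ φ_m(x) ≤ ε for every x ∈ X \ D_Q(x_m, 5r); (4′) ‖φ_m′(x)‖ ≤ ε for every x ∈ X \ D_Q(x_m, 5r). -/
open MeasureTheory intervalIntegral Set Complex

open MeasureTheory intervalIntegral Set

/-- Real powers with constant exponent are real-analytic at positive points. -/
lemma analyticAt_rpow_const' {x₀ γ : ℝ} (h : 0 < x₀) :
    AnalyticAt ℝ (fun y : ℝ => y ^ γ) x₀ := by
  have hc : AnalyticAt ℂ (fun z : ℂ => z ^ (γ : ℂ)) (x₀ : ℂ) :=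
    (analyticAt_id.cpow analyticAt_const (Complex.ofReal_mem_slitPlane.mpr h))
  have hr : AnalyticAt ℝ (fun y : ℝ => (((y : ℂ)) ^ (γ : ℂ)).re) x₀ :=
    ((Complex.reCLM.analyticAt _).comp
      ((hc.restrictScalars).comp (Complex.ofRealCLM.analyticAt _)))
  apply hr.congr
  filter_upwards [eventually_gt_nhds h] with y hy
  rw [← Complex.ofReal_cpow hy.le, Complex.ofReal_re]

open MeasureTheory intervalIntegral Set


lemma isRealAnalytic_of_analyticAt {X : Type*} [NormedAddCommGroup X] [NormedSpace ℝ X]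
    {g : X → ℝ} (h : ∀ x, AnalyticAt ℝ g x) : IsRealAnalytic g := by
  intro x
  obtain ⟨p, hp⟩ := h x
  obtain ⟨r, hr⟩ := hp
  refine ⟨Metric.eball x r, EMetric.isOpen_ball.mem_nhds (EMetric.mem_ball_self hr.r_pos),
    p, fun h hmem => ?_⟩
  have : h ∈ Metric.eball (0 : X) r := by
    rw [EMetric.mem_ball] at hmem ⊢
    calc edist h 0 = edist (x + h) (x + 0) := (edist_add_left _ _ _).symm
    _ = edist (x + h) x := by rw [add_zero]
    _ < r := hmem
  exact hr.hasSum this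

open MeasureTheory intervalIntegral Set Complex

noncomputable def Gc (k : ℕ) : ℂ → ℂ := fun z => Complex.exp (-(z / 3) ^ k)

lemma Gc_cont (k : ℕ) : Continuous (Gc k) :=
  Complex.continuous_exp.comp (((continuous_id.div_const 3).pow k).neg)

lemma Gc_norm_le (k : ℕ) {R : ℝ} {w : ℂ} (hw : ‖w‖ ≤ R) :
    ‖Gc k w‖ ≤ Real.exp ((R / 3) ^ k) := by
  have hR0 : 0 ≤ R := le_trans (norm_nonneg w) hw
  rw [Gc, Complex.norm_exp]
  apply Real.exp_le_exp.mpr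
  calc (-(w / 3) ^ k).re ≤ ‖(-(w / 3) ^ k)‖ := Complex.re_le_norm _
    _ = (‖w‖ / 3) ^ k := by
        rw [norm_neg, norm_pow, norm_div]; norm_num
    _ ≤ (R / 3) ^ k := by
        apply pow_le_pow_left₀ (by positivity)
        apply div_le_div_of_nonneg_right ?_ (by norm_num)
        · exact hw
  done

noncomputable def Fc (k : ℕ) : ℂ → ℂ := fun z => ∫ t in (0:ℝ)..(1:ℝ), z * Gc k ((t : ℂ) * z)

lemma Fc_differentiable (k : ℕ) : Differentiable ℂ (Fc k) := by
  intro z₀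
  set R : ℝ := ‖z₀‖ + 1 with hR
  have hR0 : (0:ℝ) ≤ R := by positivity
  set E : ℝ := Real.exp ((R / 3) ^ k) with hE
  have hE0 : 0 ≤ E := Real.exp_nonneg _
  set C : ℝ := E + R * (E * ((k : ℝ) * (R / 3) ^ (k - 1) * (1 / 3))) with hC
  set F' : ℂ → ℝ → ℂ := fun z t =>
    Gc k ((t : ℂ) * z) + z * (Gc k ((t : ℂ) * z) *
      (-((k : ℂ) * ((t : ℂ) * z / 3) ^ (k - 1) * ((t : ℂ) / 3)))) with hF'
  have hcont : ∀ z : ℂ, Continuous fun t : ℝ => z * Gc k ((t : ℂ) * z) := fun z =>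
    continuous_const.mul ((Gc_cont k).comp (Complex.continuous_ofReal.mul continuous_const))
  have hcont' : Continuous (F' z₀) := by
    rw [hF']
    have h1 : Continuous fun t : ℝ => Gc k ((t : ℂ) * z₀) :=
      (Gc_cont k).comp (Complex.continuous_ofReal.mul continuous_const)
    fun_prop
  have key := intervalIntegral.hasDerivAt_integral_of_dominated_loc_of_deriv_le
    (F := fun z (t : ℝ) => z * Gc k ((t : ℂ) * z)) (F' := F') (x₀ := z₀)
    (a := (0:ℝ)) (b := (1:ℝ)) (μ := volume) (bound := fun _ => C)
    (s := Metric.ball z₀ 1) (Metric.ball_mem_nhds z₀ one_pos)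
    (Filter.Eventually.of_forall fun z => ((hcont z).aestronglyMeasurable).restrict)
    ((hcont z₀).intervalIntegrable _ _)
    (hcont'.aestronglyMeasurable.restrict)
    ?_ (intervalIntegrable_const) ?_
  · exact key.2.differentiableAt
  · -- bound
    refine Filter.Eventually.of_forall fun t ht x hx => ?_
    have ht' : |t| ≤ 1 := by
      rcases Set.mem_uIoc.mp ht with h | h
      · rw [abs_of_pos h.1]; exact h.2
      · exact absurd (h.1.trans_le h.2) (by norm_num)
    have hxR : ‖x‖ ≤ R := by
      have h1 := norm_sub_norm_le x z₀
      have hd : ‖x - z₀‖ < 1 := by simpa [dist_eq_norm] using Metric.mem_ball.mp hx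
      rw [hR]; linarith
    have htx : ‖(t : ℂ) * x‖ ≤ R := by
      rw [norm_mul, Complex.norm_real]
      calc ‖t‖ * ‖x‖ ≤ 1 * R :=
            mul_le_mul ht' hxR (norm_nonneg _) zero_le_one
      _ = R := one_mul R
    have hG := Gc_norm_le k htx
    rw [hF']
    refine le_trans (norm_add_le _ _) ?_
    rw [hC]
    refine add_le_add hG ?_
    rw [norm_mul, norm_mul]
    refine mul_le_mul hxR ?_ (mul_nonneg (norm_nonneg _) (norm_nonneg _)) hR0
    refine mul_le_mul hG ?_ (norm_nonneg _) hE0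
    rw [norm_neg, norm_mul, norm_mul]
    have e3 : ‖(3:ℂ)‖ = 3 := by norm_num
    have h3 : ‖((t:ℂ) * x / 3) ^ (k-1)‖ ≤ (R / 3) ^ (k - 1) := by
      rw [norm_pow, norm_div, e3]
      gcongr
    have h4 : ‖(t:ℂ) / 3‖ ≤ 1 / 3 := by
      rw [norm_div, Complex.norm_real, e3, Real.norm_eq_abs]
      gcongr
    have h5 : ‖(k:ℂ)‖ = (k:ℝ) := by
      rw [Complex.norm_natCast]
    refine mul_le_mul (mul_le_mul (le_of_eq h5) h3 (norm_nonneg _) (by positivity)) h4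
      (norm_nonneg _) (by positivity)
  · -- differentiability
    refine Filter.Eventually.of_forall fun t ht x hx => ?_
    have hu : HasDerivAt (fun z : ℂ => (t : ℂ) * z / 3) ((t : ℂ) / 3) x := by
      simpa using ((hasDerivAt_id x).const_mul (t : ℂ)).div_const 3
    have hp : HasDerivAt (fun z : ℂ => ((t : ℂ) * z / 3) ^ k)
        ((k : ℂ) * ((t : ℂ) * x / 3) ^ (k - 1) * ((t : ℂ) / 3)) x := hu.pow k
    have hexp : HasDerivAt (fun z : ℂ => Gc k ((t : ℂ) * z))
        (Gc k ((t : ℂ) * x) * (-((k : ℂ) * ((t : ℂ) * x / 3) ^ (k - 1) * ((t : ℂ) / 3)))) x := by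
      have := (hp.neg).cexp
      simpa [Gc] using this
    have := (hasDerivAt_id' x).mul hexp
    simp only [hF']
    exact this.congr_deriv (by ring)

lemma analyticAt_primitive (k : ℕ) (t₀ : ℝ) :
    AnalyticAt ℝ (fun t : ℝ => ∫ s in (0:ℝ)..t, Real.exp (-(s / 3) ^ k)) t₀ := by
  have hFc : AnalyticOnNhd ℂ (Fc k) univ :=
    Complex.analyticOnNhd_univ_iff_differentiable.mpr (Fc_differentiable k)
  have hre : AnalyticAt ℝ (fun t : ℝ => (Fc k (t : ℂ)).re) t₀ :=
    (Complex.reCLM.analyticAt _).comp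
      (((hFc _ (mem_univ _)).restrictScalars).comp (Complex.ofRealCLM.analyticAt _))
  have key : ∀ t : ℝ, (Fc k (t : ℂ)).re = ∫ s in (0:ℝ)..t, Real.exp (-(s / 3) ^ k) := by
    intro t
    have h1 : Fc k (t : ℂ) =
        ((∫ s in (0:ℝ)..(1:ℝ), t * Real.exp (-(t * s / 3) ^ k) : ℝ) : ℂ) := by
      rw [Fc, ← intervalIntegral.integral_ofReal]
      apply intervalIntegral.integral_congr
      intro s _
      simp only [Gc]
      push_cast
      ring_nf
    have h2 : (∫ s in (0:ℝ)..(1:ℝ), t * Real.exp (-(t * s / 3) ^ k)) =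
        ∫ s in (0:ℝ)..t, Real.exp (-(s / 3) ^ k) := by
      rcases eq_or_ne t 0 with rfl | ht
      · simp
      · rw [intervalIntegral.integral_const_mul,
          intervalIntegral.integral_comp_mul_left (fun u => Real.exp (-(u / 3) ^ k)) ht]
        simp only [mul_zero, mul_one, smul_eq_mul]
        rw [← mul_assoc, mul_inv_cancel₀ ht, one_mul]
    rw [h1, h2, Complex.ofReal_re]
  exact hre.congr (Filter.Eventually.of_forall fun y => key y)


set_option maxHeartbeats 1000000


/-- **Analytic sup-partitions.** Let `X` be a separable real Banach space, `q` a continuous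
`2n`-homogeneous polynomial with `‖x‖^(2n) ≤ q x ≤ A‖x‖^(2n)`,
`Q x = (q x + 1)^(1/(2n)) - 1` with Lipschitz constant `LQ`, and `{x_m}` a dense sequence.
Then there is `L₁ ≥ 1` such that for every `r > 0` and `ε ∈ (0,1)` there are real-analytic,
`C¹` functions `φ_m : X → ℝ` which are `L₁·LQ/r`-Lipschitz, take values in `[0, 1+ε]`,
satisfy: for each `x` some `φ_m x > 1/2`; and `φ_m x ≤ ε`, `‖φ_m′ x‖ ≤ ε` whenever
`x ∉ D_Q(x_m, 5r) = {y : Q (y - x_m) < 5r}`. -/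
theorem exists_analytic_sup_partition
    {X : Type*} [NormedAddCommGroup X] [NormedSpace ℝ X] [CompleteSpace X]
    [TopologicalSpace.SeparableSpace X]
    (n : ℕ) (hn : 1 ≤ n) (A : ℝ) (hA : 1 < A)
    (q : X → ℝ)
    (M : ContinuousMultilinearMap ℝ (fun _ : Fin (2 * n) => X) ℝ)
    (hq : ∀ x : X, q x = M (fun _ => x))
    (hbound : ∀ x : X, ‖x‖ ^ (2 * n) ≤ q x ∧ q x ≤ A * ‖x‖ ^ (2 * n))
    (Q : X → ℝ) (hQ : ∀ x : X, Q x = (q x + 1) ^ ((1 : ℝ) / (2 * n)) - 1)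
    (LQ : ℝ) (hLQ : ∀ x y : X, |Q x - Q y| ≤ LQ * ‖x - y‖)
    (xs : ℕ → X) (hxs : DenseRange xs) :
    ∃ L₁ : ℝ, 1 ≤ L₁ ∧
      ∀ r : ℝ, 0 < r → ∀ ε : ℝ, 0 < ε → ε < 1 →
        ∃ φ : ℕ → X → ℝ,
          (∀ m : ℕ, IsRealAnalytic (φ m)) ∧
          (∀ m : ℕ, ContDiff ℝ 1 (φ m)) ∧
          -- (1) equi-Lipschitz with constant L₁·Lip(Q)/r
          (∀ m : ℕ, ∀ x y : X, |φ m x - φ m y| ≤ (L₁ * LQ / r) * ‖x - y‖) ∧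
          -- (2) values in [0, 1+ε]
          (∀ m : ℕ, ∀ x : X, 0 ≤ φ m x ∧ φ m x ≤ 1 + ε) ∧
          -- (3) for each x some φ_m x > 1/2
          (∀ x : X, ∃ m : ℕ, 1 / 2 < φ m x) ∧
          -- (4) φ_m ≤ ε outside D_Q(x_m, 5r)
          (∀ m : ℕ, ∀ x : X, ¬ Q (x - xs m) < 5 * r → φ m x ≤ ε) ∧
          -- (4′) ‖φ_m′‖ ≤ ε outside D_Q(x_m, 5r)
          (∀ m : ℕ, ∀ x : X, ¬ Q (x - xs m) < 5 * r → ‖fderiv ℝ (φ m) x‖ ≤ ε) := by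
  
  classical
  have hn0 : (0:ℝ) < (n:ℝ) := by exact_mod_cast hn
  have hq0 : q 0 = 0 := by
    rw [hq]
    have := M.toMultilinearMap.map_coord_zero (m := fun _ => (0:X)) (⟨0, by omega⟩ : Fin (2*n)) rfl
    simpa using this
  have hqnn : ∀ z : X, 0 ≤ q z := fun z => le_trans (by positivity) (hbound z).1
  have hQ0 : Q 0 = 0 := by rw [hQ, hq0]; norm_num
  have hQnn : ∀ z : X, 0 ≤ Q z := by
    intro z
    rw [hQ]
    have h1 : (1:ℝ) = (1:ℝ) ^ ((1:ℝ) / (2*n)) := (Real.one_rpow _).symm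
    have h2 : (1:ℝ) ^ ((1:ℝ)/(2*n)) ≤ (q z + 1) ^ ((1:ℝ)/(2*n)) :=
      Real.rpow_le_rpow (by norm_num) (by linarith [hqnn z]) (by positivity)
    linarith [h1 ▸ h2]
  have hQle : ∀ z : X, Q z ≤ LQ * ‖z‖ := by
    intro z
    have h := hLQ z 0
    rw [hQ0, sub_zero, sub_zero] at h
    exact le_trans (le_abs_self _) h
  refine ⟨1, le_refl 1, ?_⟩
  intro r hr ε hε0 hε1
  rcases subsingleton_or_nontrivial X with hX | hX
  · -- trivial space
    refine ⟨fun _ _ => 1, fun m => isRealAnalytic_of_analyticAt (fun x => analyticAt_const),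
      fun m => contDiff_const, ?_, ?_, ?_, ?_, ?_⟩
    · intro m x y
      have hxy : x = y := Subsingleton.elim x y
      subst hxy
      simp
    · exact fun m x => ⟨zero_le_one, by show (1:ℝ) ≤ 1 + ε; linarith⟩
    · exact fun x => ⟨0, by show (1:ℝ)/2 < 1; norm_num⟩
    · intro m x h
      exact absurd (by rw [Subsingleton.elim (x - xs m) (0:X), hQ0]; positivity) h
    · intro m x h
      exact absurd (by rw [Subsingleton.elim (x - xs m) (0:X), hQ0]; positivity) h
  · -- nontrivial space
    have hQlow : ∀ z : X, ‖z‖ - 1 ≤ Q z := by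
      intro z
      rw [hQ]
      have hle : ‖z‖ ≤ (q z + 1) ^ ((1:ℝ)/(2*n)) := by
        have h1 : ‖z‖ = (‖z‖ ^ (2*n)) ^ ((1:ℝ)/(2*n)) := by
          rw [← Real.rpow_natCast ‖z‖ (2*n), ← Real.rpow_mul (norm_nonneg z)]
          rw [show ((2*n : ℕ) : ℝ) * ((1:ℝ)/(2*n)) = 1 by push_cast; field_simp]
          rw [Real.rpow_one]
        rw [h1]
        exact Real.rpow_le_rpow (by positivity) (by linarith [(hbound z).1]) (by positivity)
      linarith
    have hLQ1 : (1:ℝ) ≤ LQ := by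
      by_contra hcon
      push_neg at hcon
      obtain ⟨v, hv⟩ := exists_ne (0:X)
      have hv0 : (0:ℝ) < ‖v‖ := norm_pos_iff.mpr hv
      set t : ℝ := 2 / (1 - LQ) with ht
      have hden : (0:ℝ) < 1 - LQ := by linarith
      have ht0 : 0 < t := by rw [ht]; positivity
      set y : X := (t / ‖v‖) • v with hy
      have hyn : ‖y‖ = t := by
        rw [hy, norm_smul, Real.norm_eq_abs, abs_of_pos (div_pos ht0 hv0), div_mul_cancel₀ _ hv0.ne']
      have h1 : Q y ≤ LQ * t := by
        have := hQle y
        rwa [hyn] at this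
      have h2 : t - 1 ≤ Q y := by
        have := hQlow y
        rwa [hyn] at this
      have h3 : t * (1 - LQ) ≤ 1 := by nlinarith
      rw [ht, div_mul_cancel₀ _ (by linarith : (1:ℝ) - LQ ≠ 0)] at h3
      linarith
    have hLQ0 : (0:ℝ) < LQ := lt_of_lt_of_le one_pos hLQ1
    set γ : ℝ := LQ / r with hγ
    have hγ0 : 0 < γ := div_pos hLQ0 hr
    set Rb : ℝ := 2 * Real.log (10 / ε) + Real.log ((1 + γ) / ε) + 1 with hRb
    have hlog1 : 0 ≤ Real.log (10 / ε) := Real.log_nonneg (by rw [le_div_iff₀ hε0]; linarith)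
    have hlog2 : 0 ≤ Real.log ((1 + γ) / ε) := Real.log_nonneg (by rw [le_div_iff₀ hε0]; linarith)
    have hRb1 : 1 ≤ Rb := by rw [hRb]; linarith
    obtain ⟨k, hk⟩ := pow_unbounded_of_one_lt (y := (4/3:ℝ)) Rb (by norm_num)
    have hk0 : k ≠ 0 := by
      rintro rfl
      simp at hk
      linarith
    set B4 : ℝ := (4/3:ℝ)^k with hB4
    set B5 : ℝ := (5/3:ℝ)^k with hB5
    have hB45 : B4 ≤ B5 := pow_le_pow_left₀ (by norm_num) (by norm_num) k
    have hB41 : 1 ≤ B4 := one_le_pow₀ (by norm_num)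
    have hB51 : 1 ≤ B5 := le_trans hB41 hB45
    clear_value Rb B4 B5
    set g : ℝ → ℝ := fun s => Real.exp (-(s / 3) ^ k) with hg
    have hgcont : Continuous g := by rw [hg]; fun_prop
    have hgpos : ∀ s, 0 < g s := fun s => Real.exp_pos _
    have hg_le_one : ∀ s, 0 ≤ s → g s ≤ 1 := by
      intro s hs
      rw [hg]
      rw [Real.exp_le_one_iff]
      have : 0 ≤ (s/3)^k := by positivity
      linarith
    have hg_int : IntegrableOn g (Ioi (0:ℝ)) := by
      apply Integrable.mono' (((exp_neg_integrableOn_Ioi 0 (by norm_num : (0:ℝ) < 1/3))).const_mul (Real.exp 1))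
      · exact hgcont.aestronglyMeasurable.restrict
      · filter_upwards [self_mem_ae_restrict measurableSet_Ioi] with s hs
        rw [Real.norm_eq_abs, abs_of_pos (hgpos s), hg]
        rw [← Real.exp_add]
        apply Real.exp_le_exp.mpr
        have hs0 : (0:ℝ) < s := hs
        rcases le_or_gt s 3 with h3 | h3
        · have hp : 0 ≤ (s/3)^k := by positivity
          nlinarith
        · have h1 : (1:ℝ) ≤ s/3 := by linarith
          have h2 : s/3 ≤ (s/3)^k := le_self_pow₀ h1 hk0
          nlinarith
    set I : ℝ := ∫ s in Ioi (0:ℝ), g s with hI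
    have hgae : 0 ≤ᶠ[ae (volume.restrict (Ioi (0:ℝ)))] g :=
      Filter.Eventually.of_forall fun s => (hgpos s).le
    have hI_ge : 3 / Real.exp 1 ≤ I := by
      have e1 : (∫ _ in Ioc (0:ℝ) 3, Real.exp (-1)) = 3 / Real.exp 1 := by
        rw [setIntegral_const, measureReal_def, Real.volume_Ioc]
        rw [show ((3:ℝ) - 0) = 3 by norm_num, ENNReal.toReal_ofReal (by norm_num : (0:ℝ) ≤ 3)]
        rw [smul_eq_mul, Real.exp_neg]
        ring
      have e2 : (∫ _ in Ioc (0:ℝ) 3, Real.exp (-1)) ≤ ∫ s in Ioc (0:ℝ) 3, g s := by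
        apply setIntegral_mono_on (integrableOn_const (by simp [Real.volume_Ioc]))
          (hg_int.mono_set Ioc_subset_Ioi_self) measurableSet_Ioc
        intro s hs
        rw [hg]
        apply Real.exp_le_exp.mpr
        have : (s/3)^k ≤ 1 := pow_le_one₀ (div_nonneg hs.1.le (by norm_num)) (by linarith [hs.2])
        linarith
      have e3 : (∫ s in Ioc (0:ℝ) 3, g s) ≤ I :=
        setIntegral_mono_set hg_int hgae Ioc_subset_Ioi_self.eventuallyLE
      linarith
    have hI1 : 1 ≤ I := by
      have he3 : Real.exp 1 < 3 := by
        have := Real.exp_one_lt_d9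
        linarith
      have : (1:ℝ) ≤ 3 / Real.exp 1 := by
        rw [le_div_iff₀ (Real.exp_pos 1)]
        linarith
      linarith
    have hIpos : (0:ℝ) < I := lt_of_lt_of_le one_pos hI1
    set F : ℝ → ℝ := fun t => ∫ s in (0:ℝ)..t, g s with hF
    have hgint' : ∀ a b : ℝ, IntervalIntegrable g volume a b :=
      fun a b => hgcont.intervalIntegrable _ _
    have hF0 : F 0 = 0 := integral_same
    have hFlip : ∀ u v C : ℝ, 0 ≤ C → (∀ s, min v u < s → g s ≤ C) →
        |F u - F v| ≤ C * |u - v| := by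
      intro u v C hC hgC
      rw [hF]
      rw [integral_interval_sub_left (hgint' 0 u) (hgint' 0 v)]
      have := intervalIntegral.norm_integral_le_of_norm_le_const (C := C) (f := g)
        (a := v) (b := u) ?_
      · simpa [Real.norm_eq_abs] using this
      · intro s hs
        rw [Real.norm_eq_abs, abs_of_pos (hgpos s)]
        apply hgC
        rcases Set.mem_uIoc.mp hs with h | h
        · exact lt_of_le_of_lt (min_le_left _ _) h.1
        · exact lt_of_le_of_lt (min_le_right _ _) h.1
    have hF_nonneg : ∀ t, 0 ≤ t → 0 ≤ F t := by
      intro t ht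
      exact intervalIntegral.integral_nonneg ht (fun s _ => (hgpos s).le)
    have hF_le_self : ∀ t, 0 ≤ t → F t ≤ t := by
      intro t ht
      have h1 := hFlip t 0 1 zero_le_one (fun s hs =>
        hg_le_one s (le_of_lt (by rwa [min_eq_left ht] at hs)))
      rw [hF0, sub_zero, one_mul, sub_zero, _root_.abs_of_nonneg ht] at h1
      exact le_trans (le_abs_self _) h1
    have hF_le_I : ∀ t, 0 ≤ t → F t ≤ I := by
      intro t ht
      simp only [hF]
      rw [intervalIntegral.integral_of_le ht]
      exact setIntegral_mono_set hg_int hgae Ioc_subset_Ioi_self.eventuallyLE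
    have hItail : ∀ t, 0 ≤ t → I - F t = ∫ s in Ioi t, g s := by
      intro t ht
      have hu := MeasureTheory.setIntegral_union (f := g) (μ := volume)
        (Set.Ioc_disjoint_Ioi le_rfl) measurableSet_Ioi
        (hg_int.mono_set Ioc_subset_Ioi_self) (hg_int.mono_set (Ioi_subset_Ioi ht))
      rw [Set.Ioc_union_Ioi_eq_Ioi ht] at hu
      simp only [hF]
      rw [intervalIntegral.integral_of_le ht, hI, hu]
      ring
    have htail5 : ∀ t, 5 ≤ t → I - F t ≤ 10 * Real.exp (-(B5/2)) := by
      intro t ht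
      rw [hItail t (by linarith)]
      have hint1 : IntegrableOn (fun s => Real.exp (-(1/10) * s)) (Ioi t) :=
        exp_neg_integrableOn_Ioi t (by norm_num : (0:ℝ) < 1/10)
      have hint2 : IntegrableOn (fun s => Real.exp (-(B5/2)) * Real.exp (-(1/10) * s)) (Ioi t) :=
        hint1.const_mul _
      have hmono : (∫ s in Ioi t, g s) ≤
          ∫ s in Ioi t, Real.exp (-(B5/2)) * Real.exp (-(1/10) * s) := by
        apply setIntegral_mono_on (hg_int.mono_set (Ioi_subset_Ioi (by linarith)))
          hint2 measurableSet_Ioi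
        intro s hs
        have hs5 : (5:ℝ) ≤ s := le_trans ht (le_of_lt hs)
        rw [hg, ← Real.exp_add]
        apply Real.exp_le_exp.mpr
        have h51 : (1:ℝ) ≤ s/5 := by linarith
        have h1 : B5 * (s/5) ≤ (s/3)^k := by
          have e1 : (s/3)^k = B5 * (s/5)^k := by
            rw [hB5, ← mul_pow]
            congr 1
            ring
          have e2 : s/5 ≤ (s/5)^k := le_self_pow₀ h51 hk0
          rw [e1]
          nlinarith [hB51]
        have h2 : B5/2 + (1/10)*s ≤ B5 * (s/5) := by nlinarith [hB51]
        linarith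
      have hval : (∫ s in Ioi t, Real.exp (-(B5/2)) * Real.exp (-(1/10) * s))
          ≤ 10 * Real.exp (-(B5/2)) := by
        rw [MeasureTheory.integral_const_mul]
        have hmono2 : (∫ s in Ioi t, Real.exp (-(1/10) * s)) ≤
            ∫ s in Ioi (0:ℝ), Real.exp (-(1/10) * s) := by
          apply setIntegral_mono_set (exp_neg_integrableOn_Ioi 0 (by norm_num : (0:ℝ) < 1/10))
            (Filter.Eventually.of_forall fun s => (Real.exp_pos _).le)
            (Ioi_subset_Ioi (by linarith)).eventuallyLE
        have hcomp : (∫ s in Ioi (0:ℝ), Real.exp (-(1/10) * s)) = 10 := by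
          have h := integral_comp_mul_left_Ioi (fun x => Real.exp (-x)) 0
            (by norm_num : (0:ℝ) < 1/10)
          simp only [mul_zero] at h
          have : (fun x : ℝ => Real.exp (-(1/10 * x))) = fun x : ℝ => Real.exp (-(1/10) * x) := by
            funext x; ring_nf
          rw [this] at h
          rw [h, integral_exp_neg_Ioi, smul_eq_mul]
          norm_num
        calc Real.exp (-(B5/2)) * ∫ s in Ioi t, Real.exp (-(1/10) * s)
            ≤ Real.exp (-(B5/2)) * 10 :=
              mul_le_mul_of_nonneg_left (le_of_le_of_eq hmono2 hcomp) (Real.exp_pos _).le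
          _ = 10 * Real.exp (-(B5/2)) := by ring
      linarith
    have hg4 : ∀ s, 4 ≤ s → g s ≤ Real.exp (-B4) := by
      intro s hs
      rw [hg]
      apply Real.exp_le_exp.mpr
      apply neg_le_neg
      rw [hB4]
      exact pow_le_pow_left₀ (by norm_num) (by linarith) k
    have hεB5 : 10 * Real.exp (-(B5/2)) ≤ ε := by
      have h1 : Real.log (10/ε) ≤ B5/2 := by
        have : 2 * Real.log (10/ε) ≤ Rb := by rw [hRb]; linarith
        have hb : Rb ≤ B5 := le_trans (le_of_lt hk) hB45
        linarith
      have h2 : Real.exp (-(B5/2)) ≤ Real.exp (-(Real.log (10/ε))) :=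
        Real.exp_le_exp.mpr (by linarith)
      have h3 : Real.exp (-(Real.log (10/ε))) = ε/10 := by
        rw [Real.exp_neg, Real.exp_log (by positivity), inv_div]
      nlinarith
    have hεB4 : Real.exp (-B4) * γ ≤ ε := by
      have h1 : Real.log ((1+γ)/ε) ≤ B4 := by
        have : Real.log ((1+γ)/ε) ≤ Rb := by rw [hRb]; linarith
        linarith [hk]
      have h2 : Real.exp (-B4) ≤ Real.exp (-(Real.log ((1+γ)/ε))) :=
        Real.exp_le_exp.mpr (by linarith)
      have h3 : Real.exp (-(Real.log ((1+γ)/ε))) = ε/(1+γ) := by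
        rw [Real.exp_neg, Real.exp_log (by positivity), inv_div]
      have h4 : Real.exp (-B4) * γ ≤ (ε/(1+γ)) * γ := by
        apply mul_le_mul_of_nonneg_right _ hγ0.le
        rw [← h3]; exact h2
      have h5 : (ε/(1+γ)) * γ ≤ ε := by
        rw [div_mul_eq_mul_div, div_le_iff₀ (by linarith : (0:ℝ) < 1+γ)]
        nlinarith
      linarith
    set θ : ℝ → ℝ := fun t => 1 - F t / I with hθ
    set φ : ℕ → X → ℝ := fun m x => θ (Q (x - xs m) / r) with hφ
    have hu_nonneg : ∀ (m : ℕ) (x : X), 0 ≤ Q (x - xs m) / r :=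
      fun m x => div_nonneg (hQnn _) hr.le
    have hu_lip : ∀ (m : ℕ) (x y : X),
        |Q (x - xs m) / r - Q (y - xs m) / r| ≤ γ * ‖x - y‖ := by
      intro m x y
      rw [div_sub_div_same, abs_div, _root_.abs_of_pos hr]
      have h1 : |Q (x - xs m) - Q (y - xs m)| ≤ LQ * ‖x - y‖ := by
        have := hLQ (x - xs m) (y - xs m)
        rwa [sub_sub_sub_cancel_right] at this
      calc |Q (x - xs m) - Q (y - xs m)| / r ≤ (LQ * ‖x - y‖) / r := by gcongr
        _ = γ * ‖x - y‖ := by rw [hγ]; ring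
    have hθdiff : ∀ a b : ℝ, θ a - θ b = (F b - F a) / I := by
      intro a b
      simp only [hθ]
      ring
    have hθ01 : ∀ t, 0 ≤ t → 0 ≤ θ t ∧ θ t ≤ 1 := by
      intro t ht
      constructor
      · simp only [hθ]
        have : F t / I ≤ 1 := (div_le_one hIpos).mpr (hF_le_I t ht)
        linarith
      · simp only [hθ]
        have : 0 ≤ F t / I := div_nonneg (hF_nonneg t ht) hIpos.le
        linarith
    have hθlip : ∀ a b : ℝ, 0 ≤ a → 0 ≤ b → |θ a - θ b| ≤ |a - b| := by
      intro a b ha hb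
      rw [hθdiff, abs_div, _root_.abs_of_pos hIpos]
      have h1 : |F b - F a| ≤ 1 * |b - a| := by
        apply hFlip b a 1 zero_le_one
        intro s hs
        exact hg_le_one s (le_of_lt (lt_of_le_of_lt (le_min ha hb) hs))
      rw [one_mul] at h1
      calc |F b - F a| / I ≤ |F b - F a| := div_le_self (abs_nonneg _) hI1
        _ ≤ |b - a| := h1
        _ = |a - b| := abs_sub_comm _ _
    have hana : ∀ (m : ℕ) (x₀ : X), AnalyticAt ℝ (φ m) x₀ := by
      intro m x₀
      have hd : AnalyticAt ℝ (fun y : X => y - xs m) x₀ := analyticAt_id.sub analyticAt_const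
      have hqa : ∀ z : X, AnalyticAt ℝ q z := by
        intro z
        have hfe : q = fun x : X => M (fun _ => x) := funext hq
        rw [hfe]
        have hdg : AnalyticAt ℝ (fun x : X => (fun _ : Fin (2*n) => x)) z :=
          (ContinuousLinearMap.pi (fun _ : Fin (2*n) => ContinuousLinearMap.id ℝ X)).analyticAt z
        have h := (M.analyticAt).comp hdg
        exact h
      have h1 : AnalyticAt ℝ (fun y : X => q (y - xs m)) x₀ := by
        have h := AnalyticAt.comp (f := fun y : X => y - xs m) (x := x₀) (hqa (x₀ - xs m)) hd
        exact h
      have h2 : AnalyticAt ℝ (fun y : X => q (y - xs m) + 1) x₀ := h1.add analyticAt_const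
      have hpos : 0 < q (x₀ - xs m) + 1 := by linarith [hqnn (x₀ - xs m)]
      have h3 : AnalyticAt ℝ (fun y : X => (q (y - xs m) + 1) ^ ((1:ℝ)/(2*n))) x₀ := by
        have h := AnalyticAt.comp (f := fun y : X => q (y - xs m) + 1) (x := x₀) (analyticAt_rpow_const' (γ := (1:ℝ)/(2*n)) hpos) h2
        exact h
      have h4 : AnalyticAt ℝ (fun y : X => Q (y - xs m)) x₀ := by
        apply (h3.sub analyticAt_const).congr
        exact Filter.Eventually.of_forall fun y => (hQ (y - xs m)).symm
      have h5 : AnalyticAt ℝ (fun y : X => Q (y - xs m) / r) x₀ :=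
        h4.div analyticAt_const (ne_of_gt hr)
      have h6 : AnalyticAt ℝ F (Q (x₀ - xs m) / r) := by
        have h := analyticAt_primitive k (Q (x₀ - xs m) / r)
        simp only [hF, hg]
        exact h
      have h7 : AnalyticAt ℝ (fun y : X => F (Q (y - xs m) / r)) x₀ := by
        have h := AnalyticAt.comp (f := fun y : X => Q (y - xs m) / r) (x := x₀) h6 h5
        exact h
      have h8 : AnalyticAt ℝ (fun y : X => 1 - F (Q (y - xs m) / r) / I) x₀ :=
        analyticAt_const.sub (h7.div analyticAt_const (ne_of_gt hIpos))
      simp only [hφ, hθ]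
      exact h8
    refine ⟨φ, ?_, ?_, ?_, ?_, ?_, ?_, ?_⟩
    · -- real-analytic
      exact fun m => isRealAnalytic_of_analyticAt (fun x => hana m x)
    · -- C¹
      intro m
      rw [contDiff_iff_contDiffAt]
      exact fun x => (hana m x).contDiffAt
    · -- Lipschitz
      intro m x y
      simp only [hφ]
      calc |θ (Q (x - xs m) / r) - θ (Q (y - xs m) / r)|
          ≤ |Q (x - xs m) / r - Q (y - xs m) / r| :=
            hθlip _ _ (hu_nonneg m x) (hu_nonneg m y)
        _ ≤ γ * ‖x - y‖ := hu_lip m x y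
        _ = (1 * LQ / r) * ‖x - y‖ := by rw [hγ]; ring
    · -- values
      intro m x
      have h := hθ01 _ (hu_nonneg m x)
      simp only [hφ]
      exact ⟨h.1, by linarith [h.2]⟩
    · -- somewhere > 1/2
      intro x
      obtain ⟨m, hm⟩ := hxs.exists_dist_lt x (div_pos hr (by linarith : (0:ℝ) < 2 * LQ))
      refine ⟨m, ?_⟩
      have h1 : Q (x - xs m) ≤ LQ * ‖x - xs m‖ := hQle _
      have h2 : ‖x - xs m‖ < r / (2 * LQ) := by rwa [← dist_eq_norm]
      have h3 : Q (x - xs m) < r / 2 := by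
        calc Q (x - xs m) ≤ LQ * ‖x - xs m‖ := h1
          _ < LQ * (r / (2 * LQ)) := by
              apply mul_lt_mul_of_pos_left h2 hLQ0
          _ = r / 2 := by field_simp
      have h4 : Q (x - xs m) / r < 1/2 := by
        rw [div_lt_iff₀ hr]
        calc Q (x - xs m) < r / 2 := h3
          _ = 1/2 * r := by ring
      set u := Q (x - xs m) / r with hu
      have h5 : F u < 1/2 :=
        lt_of_le_of_lt (hF_le_self u (hu_nonneg m x)) h4
      have h6 : F u / I < 1/2 := by
        calc F u / I ≤ F u := div_le_self (hF_nonneg u (hu_nonneg m x)) hI1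
          _ < 1/2 := h5
      simp only [hφ, hθ]
      linarith
    · -- small outside
      intro m x hx
      push_neg at hx
      have hu5 : (5:ℝ) ≤ Q (x - xs m) / r := by
        rw [le_div_iff₀ hr]
        linarith
      have h1 : I - F (Q (x - xs m) / r) ≤ 10 * Real.exp (-(B5/2)) := htail5 _ hu5
      simp only [hφ, hθ]
      have h2 : 1 - F (Q (x - xs m) / r) / I = (I - F (Q (x - xs m) / r)) / I := by
        field_simp
      rw [h2]
      calc (I - F (Q (x - xs m) / r)) / I ≤ I - F (Q (x - xs m) / r) := by
            apply div_le_self _ hI1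
            have := hF_le_I _ (hu_nonneg m x)
            linarith
        _ ≤ 10 * Real.exp (-(B5/2)) := h1
        _ ≤ ε := hεB5
    · -- derivative small outside
      intro m x hx
      push_neg at hx
      set S : Set X := {y : X | 4 * r < Q (y - xs m)} with hS
      have hQcont : Continuous Q := by
        have hlw : LipschitzWith (Real.toNNReal LQ) Q := by
          apply LipschitzWith.of_dist_le_mul
          intro a b
          rw [Real.dist_eq, dist_eq_norm, Real.coe_toNNReal LQ hLQ0.le]
          exact hLQ a b
        exact hlw.continuous
      have hSopen : IsOpen S :=
        isOpen_lt continuous_const (hQcont.comp (continuous_id.sub continuous_const))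
      have hxS : x ∈ S := by
        simp only [hS, mem_setOf_eq]
        nlinarith
      have hulb : ∀ y ∈ S, (4:ℝ) < Q (y - xs m) / r := by
        intro y hy
        rw [lt_div_iff₀ hr]
        have : 4 * r < Q (y - xs m) := hy
        linarith
      have hlip : LipschitzOnWith ε.toNNReal (φ m) S := by
        apply LipschitzOnWith.of_dist_le_mul
        intro y hy z hz
        rw [Real.dist_eq, dist_eq_norm]
        simp only [hφ]
        rw [hθdiff, abs_div, _root_.abs_of_pos hIpos]
        have h1 : |F (Q (z - xs m) / r) - F (Q (y - xs m) / r)| ≤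
            Real.exp (-B4) * |Q (z - xs m) / r - Q (y - xs m) / r| := by
          apply hFlip _ _ _ (Real.exp_pos _).le
          intro s hs
          apply hg4
          have h2 : (4:ℝ) < min (Q (y - xs m) / r) (Q (z - xs m) / r) :=
            lt_min (hulb y hy) (hulb z hz)
          linarith
        have h3 : |Q (z - xs m) / r - Q (y - xs m) / r| ≤ γ * ‖z - y‖ := hu_lip m z y
        have h4 : |F (Q (z - xs m) / r) - F (Q (y - xs m) / r)| / I ≤
            Real.exp (-B4) * (γ * ‖z - y‖) := by
          calc |F (Q (z - xs m) / r) - F (Q (y - xs m) / r)| / I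
              ≤ |F (Q (z - xs m) / r) - F (Q (y - xs m) / r)| :=
                div_le_self (abs_nonneg _) hI1
            _ ≤ Real.exp (-B4) * |Q (z - xs m) / r - Q (y - xs m) / r| := h1
            _ ≤ Real.exp (-B4) * (γ * ‖z - y‖) := by
                apply mul_le_mul_of_nonneg_left h3 (Real.exp_pos _).le
        calc |F (Q (z - xs m) / r) - F (Q (y - xs m) / r)| / I
            ≤ Real.exp (-B4) * γ * ‖z - y‖ := by rw [mul_assoc]; exact h4
          _ ≤ ε * ‖z - y‖ := by
              apply mul_le_mul_of_nonneg_right hεB4 (norm_nonneg _)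
          _ = ↑ε.toNNReal * ‖y - z‖ := by
              rw [Real.coe_toNNReal ε hε0.le, norm_sub_rev]
      calc ‖fderiv ℝ (φ m) x‖ ≤ ↑ε.toNNReal :=
            norm_fderiv_le_of_lipschitzOn ℝ (hSopen.mem_nhds hxS) hlip
        _ = ε := Real.coe_toNNReal ε hε0.le
end

section
/- Let X be a real normed space and let x, y ∈ X. Then sup_{0 ≤ θ ≤ 2π} ‖(cos θ)·x − (sin θ)·y‖ = sup{√(T(x)² + T(y)²) : T ∈ X*, ‖T‖ ≤ 1}, where X* denotes the continuous dual of X. -/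
/-- The complexification norm formula: for `x, y` in a real normed space,
`sup_{0 ≤ θ ≤ 2π} ‖cos θ • x - sin θ • y‖ = sup {√(T x² + T y²) : T ∈ X*, ‖T‖ ≤ 1}`. -/
theorem complexification_norm_eq
    {X : Type*} [NormedAddCommGroup X] [NormedSpace ℝ X] (x y : X) :
    sSup ((fun θ : ℝ => ‖Real.cos θ • x - Real.sin θ • y‖) '' Set.Icc 0 (2 * Real.pi)) =
    sSup ((fun T : X →L[ℝ] ℝ => Real.sqrt ((T x) ^ 2 + (T y) ^ 2)) '' {T | ‖T‖ ≤ 1}) := by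
  have hpi := Real.pi_pos
  set f : ℝ → ℝ := fun θ => ‖Real.cos θ • x - Real.sin θ • y‖ with hf
  set g : (X →L[ℝ] ℝ) → ℝ := fun T => Real.sqrt ((T x) ^ 2 + (T y) ^ 2) with hg
  have h0mem : (0 : ℝ) ∈ Set.Icc 0 (2 * Real.pi) := ⟨le_refl 0, by positivity⟩
  have hLne : (f '' Set.Icc 0 (2 * Real.pi)).Nonempty := ⟨f 0, ⟨0, h0mem, rfl⟩⟩
  have hLbdd : BddAbove (f '' Set.Icc 0 (2 * Real.pi)) := by
    refine ⟨‖x‖ + ‖y‖, ?_⟩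
    rintro _ ⟨θ, _, rfl⟩
    calc f θ ≤ ‖Real.cos θ • x‖ + ‖Real.sin θ • y‖ := norm_sub_le _ _
      _ = |Real.cos θ| * ‖x‖ + |Real.sin θ| * ‖y‖ := by rw [norm_smul, norm_smul]; rfl
      _ ≤ 1 * ‖x‖ + 1 * ‖y‖ := by
          gcongr
          · exact Real.abs_cos_le_one θ
          · exact Real.abs_sin_le_one θ
      _ = ‖x‖ + ‖y‖ := by ring
  have hRne : (g '' {T | ‖T‖ ≤ 1}).Nonempty := ⟨g 0, ⟨0, by simp, rfl⟩⟩
  have hRbdd : BddAbove (g '' {T | ‖T‖ ≤ 1}) := by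
    refine ⟨‖x‖ + ‖y‖, ?_⟩
    rintro _ ⟨T, hT, rfl⟩
    have hx : |T x| ≤ ‖x‖ := by
      calc |T x| = ‖T x‖ := rfl
        _ ≤ ‖T‖ * ‖x‖ := T.le_opNorm x
        _ ≤ 1 * ‖x‖ := by gcongr; exact hT
        _ = ‖x‖ := one_mul _
    have hy : |T y| ≤ ‖y‖ := by
      calc |T y| = ‖T y‖ := rfl
        _ ≤ ‖T‖ * ‖y‖ := T.le_opNorm y
        _ ≤ 1 * ‖y‖ := by gcongr; exact hT
        _ = ‖y‖ := one_mul _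
    calc g T ≤ Real.sqrt ((|T x| + |T y|) ^ 2) := by
          apply Real.sqrt_le_sqrt
          nlinarith [abs_nonneg (T x), abs_nonneg (T y), sq_abs (T x), sq_abs (T y)]
      _ = |T x| + |T y| := Real.sqrt_sq (by positivity)
      _ ≤ ‖x‖ + ‖y‖ := add_le_add hx hy
  apply le_antisymm
  · apply csSup_le hLne
    rintro _ ⟨θ, _, rfl⟩
    by_cases hv : Real.cos θ • x - Real.sin θ • y = 0
    · show f θ ≤ _
      rw [hf]
      simp only [hv, norm_zero]
      refine le_csSup_of_le hRbdd ⟨0, by simp, rfl⟩ ?_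
      simp [hg, Real.sqrt_nonneg]
    · obtain ⟨T, hT1, hTv⟩ := exists_dual_vector ℝ _ (norm_ne_zero_iff.mpr hv)
      have hval : T (Real.cos θ • x - Real.sin θ • y) = ‖Real.cos θ • x - Real.sin θ • y‖ := by
        simpa using hTv
      have hlin : T (Real.cos θ • x - Real.sin θ • y) = Real.cos θ * T x - Real.sin θ * T y := by
        simp [map_sub, map_smul, smul_eq_mul]
      have key : Real.cos θ * T x - Real.sin θ * T y ≤ Real.sqrt ((T x) ^ 2 + (T y) ^ 2) := by
        have h1 : (Real.cos θ * T x - Real.sin θ * T y) ^ 2 ≤ (T x) ^ 2 + (T y) ^ 2 := by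
          nlinarith [sq_nonneg (Real.sin θ * T x + Real.cos θ * T y), Real.sin_sq_add_cos_sq θ]
        calc Real.cos θ * T x - Real.sin θ * T y
            ≤ |Real.cos θ * T x - Real.sin θ * T y| := le_abs_self _
          _ = Real.sqrt ((Real.cos θ * T x - Real.sin θ * T y) ^ 2) := (Real.sqrt_sq_eq_abs _).symm
          _ ≤ _ := Real.sqrt_le_sqrt h1
      refine le_csSup_of_le hRbdd ⟨T, le_of_eq hT1, rfl⟩ ?_
      show ‖Real.cos θ • x - Real.sin θ • y‖ ≤ Real.sqrt ((T x) ^ 2 + (T y) ^ 2)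
      calc ‖Real.cos θ • x - Real.sin θ • y‖ = Real.cos θ * T x - Real.sin θ * T y := by
            rw [← hval, hlin]
        _ ≤ _ := key
  · apply csSup_le hRne
    rintro _ ⟨T, hT, rfl⟩
    set a := T x with ha
    set b := T y with hb
    set r := Real.sqrt (a ^ 2 + b ^ 2) with hr
    by_cases hr0 : r = 0
    · show Real.sqrt ((T x) ^ 2 + (T y) ^ 2) ≤ _
      rw [← ha, ← hb, ← hr, hr0]
      exact le_csSup_of_le hLbdd ⟨0, h0mem, rfl⟩ (norm_nonneg _)
    · have hrpos : 0 < r := lt_of_le_of_ne (Real.sqrt_nonneg _) (Ne.symm hr0)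
      have hr2 : r ^ 2 = a ^ 2 + b ^ 2 := Real.sq_sqrt (by positivity)
      set z : ℂ := Complex.mk (a / r) (-b / r) with hz
      have habs : ‖z‖ = 1 := by
        rw [Complex.norm_def, hz, Complex.normSq_mk]
        have h1 : a / r * (a / r) + -b / r * (-b / r) = 1 := by
          field_simp
          nlinarith [hr2]
        rw [h1, Real.sqrt_one]
      have hz0 : z ≠ 0 := by
        intro h
        rw [h] at habs
        simp at habs
      have hcos : Real.cos z.arg = a / r := by
        rw [Complex.cos_arg hz0, habs]
        simp [hz]
      have hsin : Real.sin z.arg = -b / r := by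
        rw [Complex.sin_arg, habs]
        simp [hz]
      obtain ⟨θ, hθmem, hθc, hθs⟩ :
          ∃ θ ∈ Set.Icc (0:ℝ) (2 * Real.pi), Real.cos θ = a / r ∧ Real.sin θ = -b / r := by
        rcases le_or_gt 0 z.arg with h | h
        · exact ⟨z.arg, ⟨h, (Complex.arg_le_pi z).trans (by nlinarith)⟩, hcos, hsin⟩
        · refine ⟨z.arg + 2 * Real.pi,
            ⟨by nlinarith [Complex.neg_pi_lt_arg z], by nlinarith⟩, ?_, ?_⟩
          · rw [Real.cos_add_two_pi]; exact hcos
          · rw [Real.sin_add_two_pi]; exact hsin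
      have hval : T (Real.cos θ • x - Real.sin θ • y) = r := by
        rw [map_sub, map_smul, map_smul, smul_eq_mul, smul_eq_mul, ← ha, ← hb, hθc, hθs]
        field_simp
        nlinarith [hr2]
      have hle : r ≤ ‖Real.cos θ • x - Real.sin θ • y‖ := by
        calc r = T (Real.cos θ • x - Real.sin θ • y) := hval.symm
          _ ≤ |T (Real.cos θ • x - Real.sin θ • y)| := le_abs_self _
          _ ≤ ‖T‖ * ‖Real.cos θ • x - Real.sin θ • y‖ := T.le_opNorm _
          _ ≤ 1 * ‖Real.cos θ • x - Real.sin θ • y‖ := by gcongr; exact hT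
          _ = _ := one_mul _
      show Real.sqrt ((T x) ^ 2 + (T y) ^ 2) ≤ _
      rw [← ha, ← hb, ← hr]
      exact hle.trans (le_csSup hLbdd ⟨θ, hθmem, rfl⟩)
end
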